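/- For g = [[a,b],[c,d]] in G_{v1}(k) and w_0 ∈ P^1(F) with |w_0| ≥ |ϖ|^{-1} (or w_0 = ∞), one has |1/(w_0·g) − 1/w_0| ≤ |ϖ|^{k+1}, where 1/∞ := 0; hence the G_{v1}(k)-orbits on the region {|w| ≥ |ϖ|^{-1}} ∪ {∞} are discs of radius |ϖ|^{k+1} in the coordinate 1/w. -/

import Mathlib

open Matrix Pointwise
open scoped OnePoint

noncomputable section

/-- `ϖ` is a uniformizer of the nonarchimedean field `F`. -/
def IsUniformizer (F : Type*) [NormedField F] (ϖ : F) : Prop :=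
  ϖ ≠ 0 ∧ ‖ϖ‖ < 1 ∧ ∀ x : F, ‖x‖ < 1 → ‖x‖ ≤ ‖ϖ‖

/-- The principal congruence subgroup `G_{v₀}(k)` of level `k`: matrices in `GL₂(𝒪)`
congruent to the identity modulo `ϖ^k` (entrywise, each entry of `g - 1` lies in `ϖ^k 𝒪`,
i.e. has norm at most `‖ϖ‖^k`). -/
def Gv0 (F : Type*) [NormedField F] (ϖ : F) (k : ℕ) : Set (GL (Fin 2) F) :=
  {g | ‖(g : Matrix (Fin 2) (Fin 2) F) 0 0 - 1‖ ≤ ‖ϖ‖ ^ k ∧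
       ‖(g : Matrix (Fin 2) (Fin 2) F) 0 1‖ ≤ ‖ϖ‖ ^ k ∧
       ‖(g : Matrix (Fin 2) (Fin 2) F) 1 0‖ ≤ ‖ϖ‖ ^ k ∧
       ‖(g : Matrix (Fin 2) (Fin 2) F) 1 1 - 1‖ ≤ ‖ϖ‖ ^ k}

/-- The diagonal matrix `diag(ϖ, 1)` as an element of `GL₂(F)`. -/
def dmat (F : Type*) [Field F] (ϖ : F) (h : ϖ ≠ 0) : GL (Fin 2) F :=
  Matrix.GeneralLinearGroup.mkOfDetNeZero !![ϖ, 0; 0, 1]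
    (by simpa [Matrix.det_fin_two_of] using h)

/-- `G_{v₁}(k) = diag(ϖ,1) · G_{v₀}(k) · diag(ϖ,1)⁻¹`. -/
def Gv1 (F : Type*) [NormedField F] (ϖ : F) (h : ϖ ≠ 0) (k : ℕ) : Set (GL (Fin 2) F) :=
  (fun g => dmat F ϖ h * g * (dmat F ϖ h)⁻¹) '' Gv0 F ϖ k

/-- The explicit set `H` of matrices `[[1+ϖ^k a, ϖ^k b],[ϖ^{k-1} c, 1+ϖ^k d]]`, `a,b,c,d ∈ 𝒪`;
this is the edge group `G_e(k)`. -/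
def Ge (F : Type*) [NormedField F] (ϖ : F) (k : ℕ) : Set (GL (Fin 2) F) :=
  {g | ‖(g : Matrix (Fin 2) (Fin 2) F) 0 0 - 1‖ ≤ ‖ϖ‖ ^ k ∧
       ‖(g : Matrix (Fin 2) (Fin 2) F) 0 1‖ ≤ ‖ϖ‖ ^ k ∧
       ‖(g : Matrix (Fin 2) (Fin 2) F) 1 0‖ ≤ ‖ϖ‖ ^ (k - 1) ∧
       ‖(g : Matrix (Fin 2) (Fin 2) F) 1 1 - 1‖ ≤ ‖ϖ‖ ^ k}

/-- The explicit description of `G_{v₁}(k)`: matrices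
`[[1+ϖ^k a, ϖ^{k+1} b],[ϖ^{k-1} c, 1+ϖ^k d]]` with `a,b,c,d ∈ 𝒪`. -/
def Gv1ex (F : Type*) [NormedField F] (ϖ : F) (k : ℕ) : Set (GL (Fin 2) F) :=
  {g | ‖(g : Matrix (Fin 2) (Fin 2) F) 0 0 - 1‖ ≤ ‖ϖ‖ ^ k ∧
       ‖(g : Matrix (Fin 2) (Fin 2) F) 0 1‖ ≤ ‖ϖ‖ ^ (k + 1) ∧
       ‖(g : Matrix (Fin 2) (Fin 2) F) 1 0‖ ≤ ‖ϖ‖ ^ (k - 1) ∧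
       ‖(g : Matrix (Fin 2) (Fin 2) F) 1 1 - 1‖ ≤ ‖ϖ‖ ^ k}

open scoped Classical in
/-- The right Möbius action of `g = [[a,b],[c,d]]` on `ℙ¹(F) = F ∪ {∞}` (here modelled as
`Option F`, with `none = ∞`): `z·g = (az+c)/(bz+d)`, `∞·g = a/b`, with value `∞` when the
denominator vanishes. -/
def moeb (F : Type*) [Field F] (g : Matrix (Fin 2) (Fin 2) F) : Option F → Option F
  | Option.some z => if g 0 1 * z + g 1 1 = 0 then Option.none
      else Option.some ((g 0 0 * z + g 1 0) / (g 0 1 * z + g 1 1))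
  | Option.none => if g 0 1 = 0 then Option.none else Option.some (g 0 0 / g 0 1)

/-- The orbit of `z ∈ ℙ¹(F)` under a set `S` of elements of `GL₂(F)` acting on the right by
Möbius transformations. -/
def orb (F : Type*) [Field F] (S : Set (GL (Fin 2) F)) (z : Option F) : Set (Option F) :=
  {w | ∃ g ∈ S, moeb F (g : Matrix (Fin 2) (Fin 2) F) z = w}

/-- `D` is an orbit of `S` on `ℙ¹(F)`. -/
def IsOrbit (F : Type*) [Field F] (S : Set (GL (Fin 2) F)) (D : Set (Option F)) : Prop :=
  ∃ z, D = orb F S z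

/-- The region `B_w(∞, |ϖ|) = {w ∈ ℙ¹(F) : |1/w| ≤ |ϖ|} = {|w| ≥ |ϖ|⁻¹} ∪ {∞}`. -/
def regionInfty (F : Type*) [NormedField F] (ϖ : F) : Set (Option F) :=
  {w | w = Option.none ∨ ∃ z : F, w = Option.some z ∧ ‖ϖ‖⁻¹ ≤ ‖z‖}

/-- The coordinate `1/w` on `ℙ¹(F)`, with `1/∞ = 0`. -/
def invc (F : Type*) [Field F] : Option F → F
  | Option.none => 0
  | Option.some z => z⁻¹

/-- The residue field of `F` has cardinality `q`: there are exactly `q` classes in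
`𝒪/(ϖ)`, witnessed by a set of representatives. -/
def ResidueCard (F : Type*) [NormedField F] (ϖ : F) (q : ℕ) : Prop :=
  ∃ s : Finset F, s.card = q ∧ (∀ x ∈ s, ‖x‖ ≤ 1) ∧
    ∀ x : F, ‖x‖ ≤ 1 → ∃! y, y ∈ s ∧ ‖x - y‖ ≤ ‖ϖ‖

/-- The conjugate `h S h⁻¹` of a set of matrices. -/
def conjSet (F : Type*) [Field F] (h : GL (Fin 2) F) (S : Set (GL (Fin 2) F)) :
    Set (GL (Fin 2) F) :=
  (fun g => h * g * h⁻¹) '' S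

/-- The matrix `g_α = [[1,0],[α,ϖ]]` as an element of `GL₂(F)`. -/
def galpha (F : Type*) [Field F] (ϖ α : F) (h : ϖ ≠ 0) : GL (Fin 2) F :=
  Matrix.GeneralLinearGroup.mkOfDetNeZero !![1, 0; α, ϖ]
    (by simpa [Matrix.det_fin_two_of] using h)

/-- The diagonal matrix `diag(1, ϖ^n)` as an element of `GL₂(F)`. -/
def dmatN (F : Type*) [Field F] (ϖ : F) (h : ϖ ≠ 0) (n : ℕ) : GL (Fin 2) F :=
  Matrix.GeneralLinearGroup.mkOfDetNeZero !![1, 0; 0, ϖ ^ n]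
    (by simpa [Matrix.det_fin_two_of] using pow_ne_zero n h)

section Aux

variable {F : Type*} [NormedField F] [IsUltrametricDist F]

lemma aux_norm_add_eq_left {a b : F} (h : ‖b‖ < ‖a‖) : ‖a + b‖ = ‖a‖ := by
  rw [IsUltrametricDist.norm_add_eq_max_of_norm_ne_norm h.ne', max_eq_left h.le]

lemma aux_norm_eq_one {A : F} (h : ‖A - 1‖ < 1) : ‖A‖ = 1 := by
  have h1 : ‖A - 1‖ < ‖(1 : F)‖ := by simpa using h
  have := aux_norm_add_eq_left (a := (1 : F)) (b := A - 1) h1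
  simpa using this

lemma aux_region {ϖ z : F} (h : Option.some z ∈ regionInfty F ϖ) : ‖ϖ‖⁻¹ ≤ ‖z‖ := by
  obtain h | ⟨y, hy, hy2⟩ := h
  · exact absurd h (by simp)
  · obtain rfl : z = y := by simpa using hy
    exact hy2

lemma aux_ne_zero {ϖ z : F} (hϖ0 : ϖ ≠ 0) (h : ‖ϖ‖⁻¹ ≤ ‖z‖) : z ≠ 0 := by
  intro hz
  rw [hz, norm_zero] at h
  have h2 : (0:ℝ) < ‖ϖ‖⁻¹ := by
    have := norm_pos_iff.mpr hϖ0
    positivity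
  linarith

lemma aux_key (ϖ : F) (hϖ0 : ϖ ≠ 0) (hϖ1 : ‖ϖ‖ < 1) (k : ℕ) (hk : 1 ≤ k) :
    ∀ g ∈ Gv1ex F ϖ k, ∀ w₀ ∈ regionInfty F ϖ,
      moeb F (g : Matrix (Fin 2) (Fin 2) F) w₀ ∈ regionInfty F ϖ ∧
      ‖invc F (moeb F (g : Matrix (Fin 2) (Fin 2) F) w₀) - invc F w₀‖ ≤ ‖ϖ‖ ^ (k + 1) := by
  intro g hg w₀ hw₀
  obtain ⟨hA, hB, hC, hD⟩ := hg
  set M := (g : Matrix (Fin 2) (Fin 2) F) with hM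
  have hq0 : (0 : ℝ) < ‖ϖ‖ := norm_pos_iff.mpr hϖ0
  have hqk1 : ‖ϖ‖ ^ k < 1 := pow_lt_one₀ hq0.le hϖ1 (by omega)
  have hAn : ‖M 0 0‖ = 1 := aux_norm_eq_one (lt_of_le_of_lt hA hqk1)
  have hDn : ‖M 1 1‖ = 1 := aux_norm_eq_one (lt_of_le_of_lt hD hqk1)
  have hBq : ‖M 0 1‖ ≤ ‖ϖ‖ := hB.trans (by
    calc ‖ϖ‖ ^ (k + 1) ≤ ‖ϖ‖ ^ 1 := pow_le_pow_of_le_one hq0.le hϖ1.le (by omega)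
    _ = ‖ϖ‖ := pow_one _)
  have hC1 : ‖M 1 0‖ ≤ 1 := hC.trans (pow_le_one₀ hq0.le hϖ1.le)
  have hqinv : (1 : ℝ) < ‖ϖ‖⁻¹ := (one_lt_inv₀ hq0).mpr hϖ1
  match w₀, hw₀ with
  | Option.none, _ =>
    simp only [moeb]
    split_ifs with hb
    · refine ⟨Or.inl rfl, ?_⟩
      simp [invc, hq0.le]
    · constructor
      · refine Or.inr ⟨M 0 0 / M 0 1, rfl, ?_⟩
        rw [norm_div, hAn]
        rw [le_div_iff₀ (norm_pos_iff.mpr hb)]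
        calc ‖ϖ‖⁻¹ * ‖M 0 1‖ ≤ ‖ϖ‖⁻¹ * ‖ϖ‖ := by
              exact mul_le_mul_of_nonneg_left hBq (by positivity)
          _ = 1 := inv_mul_cancel₀ hq0.ne'
      · simp only [invc, sub_zero]
        rw [div_eq_mul_inv, mul_inv, inv_inv, norm_mul, norm_inv, hAn]
        simpa using hB
  | Option.some z, hw₀ =>
    have hz : ‖ϖ‖⁻¹ ≤ ‖z‖ := aux_region hw₀
    have hz1 : (1 : ℝ) < ‖z‖ := lt_of_lt_of_le hqinv hz
    have hz0 : z ≠ 0 := aux_ne_zero hϖ0 hz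
    have hzinv : ‖z⁻¹‖ ≤ ‖ϖ‖ := by
      rw [norm_inv, inv_le_comm₀ (by positivity) hq0]
      exact hz
    simp only [moeb]
    split_ifs with hb
    · -- denominator vanishes: result is ∞
      have hDz : ‖M 0 1 * z‖ = 1 := by
        have : M 1 1 = -(M 0 1 * z) := by linear_combination hb
        rw [← norm_neg, ← this, hDn]
      refine ⟨Or.inl rfl, ?_⟩
      simp only [invc, zero_sub, norm_neg, norm_inv]
      -- ‖z‖⁻¹ ≤ ‖ϖ‖^{k+1} since ‖B‖‖z‖ = 1 and ‖B‖ ≤ ‖ϖ‖^{k+1}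
      rw [norm_mul] at hDz
      have hB0 : ‖M 0 1‖ ≠ 0 := by
        intro h; rw [h, zero_mul] at hDz; norm_num at hDz
      have : ‖z‖⁻¹ = ‖M 0 1‖ := by
        field_simp
        linarith [hDz]
      rw [this]; exact hB
    · -- main case
      have hnum : ‖M 0 0 * z + M 1 0‖ = ‖z‖ := by
        rw [aux_norm_add_eq_left]
        · rw [norm_mul, hAn, one_mul]
        · rw [norm_mul, hAn, one_mul]
          exact lt_of_le_of_lt hC1 hz1
      have hnum0 : M 0 0 * z + M 1 0 ≠ 0 := by
        intro h; rw [h, norm_zero] at hnum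
        exact (norm_ne_zero_iff.mpr hz0) hnum.symm
      set u := (M 0 0 * z + M 1 0) / (M 0 1 * z + M 1 1) with hu
      have hu0 : u ≠ 0 := div_ne_zero hnum0 hb
      -- key difference estimate
      have hdiff : u⁻¹ - z⁻¹ =
          (M 0 1 * z ^ 2 + (M 1 1 - M 0 0) * z - M 1 0) / (z * (M 0 0 * z + M 1 0)) := by
        rw [hu]
        field_simp
        ring
      have hzn2 : (0:ℝ) < ‖z‖ := by linarith
      have hNle : ‖M 0 1 * z ^ 2 + (M 1 1 - M 0 0) * z - M 1 0‖ ≤ ‖ϖ‖ ^ (k+1) * (‖z‖ * ‖z‖) := by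
        have t1 : ‖M 0 1 * z ^ 2‖ ≤ ‖ϖ‖ ^ (k+1) * (‖z‖ * ‖z‖) := by
          rw [norm_mul, norm_pow]
          calc ‖M 0 1‖ * ‖z‖ ^ 2 ≤ ‖ϖ‖ ^ (k+1) * ‖z‖ ^ 2 := by
                exact mul_le_mul_of_nonneg_right hB (by positivity)
            _ = ‖ϖ‖ ^ (k+1) * (‖z‖ * ‖z‖) := by ring
        have t2 : ‖(M 1 1 - M 0 0) * z‖ ≤ ‖ϖ‖ ^ (k+1) * (‖z‖ * ‖z‖) := by
          rw [norm_mul]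
          have hDA : ‖M 1 1 - M 0 0‖ ≤ ‖ϖ‖ ^ k := by
            have : M 1 1 - M 0 0 = (M 1 1 - 1) + -(M 0 0 - 1) := by ring
            rw [this]
            refine (IsUltrametricDist.norm_add_le_max _ _).trans (max_le hD ?_)
            rw [norm_neg]; exact hA
          have hzq : ‖ϖ‖ ^ k ≤ ‖ϖ‖ ^ (k+1) * ‖z‖ := by
            calc ‖ϖ‖ ^ k = ‖ϖ‖ ^ (k+1) * ‖ϖ‖⁻¹ := by
                  rw [pow_succ]; field_simp
              _ ≤ ‖ϖ‖ ^ (k+1) * ‖z‖ := mul_le_mul_of_nonneg_left hz (by positivity)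
          calc ‖M 1 1 - M 0 0‖ * ‖z‖ ≤ (‖ϖ‖ ^ (k+1) * ‖z‖) * ‖z‖ :=
                mul_le_mul (hDA.trans hzq) le_rfl (norm_nonneg _) (by positivity)
            _ = ‖ϖ‖ ^ (k+1) * (‖z‖ * ‖z‖) := by ring
        have t3 : ‖M 1 0‖ ≤ ‖ϖ‖ ^ (k+1) * (‖z‖ * ‖z‖) := by
          have h1 : ‖ϖ‖ ^ (k-1) = ‖ϖ‖ ^ (k+1) * (‖ϖ‖⁻¹ * ‖ϖ‖⁻¹) := by
            rw [show k + 1 = (k-1) + 2 by omega, pow_add]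
            field_simp
          have h2 : ‖ϖ‖⁻¹ * ‖ϖ‖⁻¹ ≤ ‖z‖ * ‖z‖ :=
            mul_le_mul hz hz (by positivity) (by positivity)
          calc ‖M 1 0‖ ≤ ‖ϖ‖ ^ (k-1) := hC
            _ ≤ ‖ϖ‖ ^ (k+1) * (‖z‖ * ‖z‖) := by
                rw [h1]; exact mul_le_mul_of_nonneg_left h2 (by positivity)
        have step : ‖M 0 1 * z ^ 2 + (M 1 1 - M 0 0) * z‖ ≤ ‖ϖ‖ ^ (k+1) * (‖z‖ * ‖z‖) :=
          (IsUltrametricDist.norm_add_le_max _ _).trans (max_le t1 t2)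
        rw [sub_eq_add_neg]
        refine (IsUltrametricDist.norm_add_le_max _ _).trans (max_le step ?_)
        rw [norm_neg]; exact t3
      have hdiffle : ‖u⁻¹ - z⁻¹‖ ≤ ‖ϖ‖ ^ (k + 1) := by
        rw [hdiff, norm_div, norm_mul, hnum, div_le_iff₀ (by positivity)]
        exact hNle
      constructor
      · refine Or.inr ⟨u, rfl, ?_⟩
        have huinv : ‖u⁻¹‖ ≤ ‖ϖ‖ := by
          have : u⁻¹ = (u⁻¹ - z⁻¹) + z⁻¹ := by ring
          rw [this]
          refine (IsUltrametricDist.norm_add_le_max _ _).trans (max_le ?_ hzinv)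
          calc ‖u⁻¹ - z⁻¹‖ ≤ ‖ϖ‖ ^ (k+1) := hdiffle
            _ ≤ ‖ϖ‖ ^ 1 := pow_le_pow_of_le_one hq0.le hϖ1.le (by omega)
            _ = ‖ϖ‖ := pow_one _
        rw [norm_inv] at huinv
        exact (inv_le_comm₀ hq0 (norm_pos_iff.mpr hu0)).mpr huinv
      · simpa [invc] using hdiffle

end Aux

theorem statement7 (p : ℕ) [Fact p.Prime] (F : Type*) [NontriviallyNormedField F]
    [IsUltrametricDist F] [NormedAlgebra ℚ_[p] F] [FiniteDimensional ℚ_[p] F]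
    (ϖ : F) (hϖ : IsUniformizer F ϖ) (k : ℕ) (hk : 1 ≤ k) :
    (∀ g ∈ Gv1ex F ϖ k, ∀ w₀ ∈ regionInfty F ϖ,
      moeb F (g : Matrix (Fin 2) (Fin 2) F) w₀ ∈ regionInfty F ϖ ∧
      ‖invc F (moeb F (g : Matrix (Fin 2) (Fin 2) F) w₀) - invc F w₀‖ ≤ ‖ϖ‖ ^ (k + 1)) ∧
    (∀ w₀ ∈ regionInfty F ϖ,
      orb F (Gv1ex F ϖ k) w₀ =
        {w | w ∈ regionInfty F ϖ ∧ ‖invc F w - invc F w₀‖ ≤ ‖ϖ‖ ^ (k + 1)}) := by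
  obtain ⟨hϖ0, hϖ1, -⟩ := hϖ
  have key := aux_key ϖ hϖ0 hϖ1 k hk
  have hq0 : (0 : ℝ) < ‖ϖ‖ := norm_pos_iff.mpr hϖ0
  refine ⟨key, ?_⟩
  intro w₀ hw₀
  ext w
  constructor
  · rintro ⟨g, hg, rfl⟩
    exact (key g hg w₀ hw₀)
  · rintro ⟨hw, hdist⟩
    -- construct the unipotent element g = [[1, invc w - invc w₀],[0,1]]
    set b := invc F w - invc F w₀ with hb
    have hdet : Matrix.det !![(1:F), b; 0, 1] ≠ 0 := by
      simp [Matrix.det_fin_two_of]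
    refine ⟨Matrix.GeneralLinearGroup.mkOfDetNeZero !![(1:F), b; 0, 1] hdet, ?_, ?_⟩
    · have e : ((Matrix.GeneralLinearGroup.mkOfDetNeZero !![(1:F), b; 0, 1] hdet :
          GL (Fin 2) F) : Matrix (Fin 2) (Fin 2) F) = !![(1:F), b; 0, 1] := rfl
      refine ⟨?_, ?_, ?_, ?_⟩ <;> rw [e] <;> simp <;> first
        | positivity
        | exact hdist
    · have e : ((Matrix.GeneralLinearGroup.mkOfDetNeZero !![(1:F), b; 0, 1] hdet :
          GL (Fin 2) F) : Matrix (Fin 2) (Fin 2) F) = !![(1:F), b; 0, 1] := rfl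
      rw [e]
      have hqinv : (1 : ℝ) < ‖ϖ‖⁻¹ := (one_lt_inv₀ hq0).mpr hϖ1
      match w₀, hw₀, w, hw with
      | Option.none, _, Option.none, _ =>
        have hb0 : b = 0 := by simp [hb, invc]
        simp [moeb, hb0]
      | Option.none, _, Option.some y, hw =>
        have hy : ‖ϖ‖⁻¹ ≤ ‖y‖ := aux_region hw
        have hy0 : y ≠ 0 := aux_ne_zero hϖ0 hy
        have hb0 : b = y⁻¹ := by simp [hb, invc]
        have : b ≠ 0 := by rw [hb0]; exact inv_ne_zero hy0
        simp only [moeb]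
        rw [if_neg (by simpa using this)]
        simp [hb0, hy0]
      | Option.some z, hw₀, Option.none, _ =>
        have hz : ‖ϖ‖⁻¹ ≤ ‖z‖ := aux_region hw₀
        have hz0 : z ≠ 0 := aux_ne_zero hϖ0 hz
        have hb0 : b = -z⁻¹ := by simp [hb, invc]
        simp only [moeb]
        rw [if_pos]
        simp [hb0, hz0]
      | Option.some z, hw₀, Option.some y, hw =>
        have hz : ‖ϖ‖⁻¹ ≤ ‖z‖ := aux_region hw₀
        have hy : ‖ϖ‖⁻¹ ≤ ‖y‖ := aux_region hw
        have hz0 : z ≠ 0 := aux_ne_zero hϖ0 hz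
        have hy0 : y ≠ 0 := aux_ne_zero hϖ0 hy
        have hb0 : b = y⁻¹ - z⁻¹ := by simp [hb, invc]
        have hden : b * z + 1 = y⁻¹ * z := by
          rw [hb0]; field_simp; ring
        have hden0 : b * z + 1 ≠ 0 := by
          rw [hden]; exact mul_ne_zero (inv_ne_zero hy0) hz0
        simp only [moeb]
        rw [if_neg (by simpa using hden0)]
        congr 1
        have e2 : !![(1:F), b; 0, 1] 0 1 * z + !![(1:F), b; 0, 1] 1 1 = b * z + 1 := by simp
        rw [e2, hden]
        simp only [show !![(1:F), b; 0, 1] 0 0 = 1 by simp,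
          show !![(1:F), b; 0, 1] 1 0 = 0 by simp]
        field_simp
        ring
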